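/- If a topological space X is weakly initially λ-compact for every λ < ν and is [cf(ν), cf(ν)]-compact, where ν is a singular cardinal, then X is weakly initially ν-compact. -/

import Mathlib

open Cardinal Set

universe u v

/-- `x` is a `D`-limit point of the family of sets `O`. -/
def DLimitSets {X : Type u} {I : Type v} [TopologicalSpace X]
    (D : Ultrafilter I) (O : I → Set X) (x : X) : Prop :=
  ∀ U ∈ nhds x, {i | (U ∩ O i).Nonempty} ∈ D

/-- `X` is `D`-pseudocompact. -/
def DPseudocompact (X : Type u) {I : Type v} [TopologicalSpace X]
    (D : Ultrafilter I) : Prop :=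
  ∀ O : I → Set X, (∀ i, IsOpen (O i)) → (∀ i, (O i).Nonempty) →
    ∃ x : X, DLimitSets D O x

/-- Every open cover of cardinality at most `lam` has a finite subfamily with dense union. -/
def WeaklyInitiallyCompact (X : Type u) [TopologicalSpace X] (lam : Cardinal.{u}) : Prop :=
  ∀ 𝒰 : Set (Set X), (∀ U ∈ 𝒰, IsOpen U) → ⋃₀ 𝒰 = Set.univ →
    Cardinal.mk 𝒰 ≤ lam →
    ∃ t : Finset (Set X), ↑t ⊆ 𝒰 ∧ Dense (⋃₀ (t : Set (Set X)))

/-- A regular ultrafilter over `I` (regular of degree `|I|`): there is an `I`-indexed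
family of members of `D` every infinite subfamily of which has empty intersection. -/
def RegularUltrafilter {I : Type v} (D : Ultrafilter I) : Prop :=
  ∃ Z : I → Set I, (∀ i, Z i ∈ D) ∧
    ∀ S : Set I, S.Infinite → ⋂ i ∈ S, Z i = ∅

/-- Every open cover of cardinality exactly `κ` has a subcover of cardinality `< κ`. -/
def KappaKappaCompact (X : Type u) [TopologicalSpace X] (κ : Cardinal.{u}) : Prop :=
  ∀ 𝒰 : Set (Set X), (∀ U ∈ 𝒰, IsOpen U) → ⋃₀ 𝒰 = Set.univ →
    Cardinal.mk 𝒰 = κ →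
    ∃ 𝒱 ⊆ 𝒰, ⋃₀ 𝒱 = Set.univ ∧ Cardinal.mk 𝒱 < κ

theorem singular_weaklyInitiallyCompact
    {X : Type u} [TopologicalSpace X] (ν : Cardinal.{u})
    (hν : Cardinal.aleph0 ≤ ν) (hsing : ν.ord.cof < ν)
    (hlt : ∀ lam < ν, WeaklyInitiallyCompact X lam)
    (hcf : KappaKappaCompact X ν.ord.cof) :
    WeaklyInitiallyCompact X ν := by
  intro 𝒰 hop hcov hcard
  -- embed the cover into ν.ord.ToType
  have hmkT : (Cardinal.mk 𝒰 : Cardinal) ≤ Cardinal.mk ν.ord.ToType := by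
    rw [Cardinal.mk_ord_toType]; exact hcard
  obtain ⟨g⟩ := Cardinal.le_def _ _ |>.1 hmkT
  -- the filtration
  set V : ν.ord.ToType → Set X := fun s => ⋃₀ {U | ∃ h : U ∈ 𝒰, g ⟨U, h⟩ ≤ s} with hV
  have hVmono : ∀ {s t : ν.ord.ToType}, s ≤ t → V s ⊆ V t := by
    rintro s t hst x ⟨U, ⟨hU, hle⟩, hxU⟩
    exact ⟨U, ⟨hU, hle.trans hst⟩, hxU⟩
  have hVopen : ∀ s, IsOpen (V s) := fun s =>
    isOpen_sUnion fun U hU => hop U hU.1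
  -- a cofinal set of indices
  haveI hwo : IsWellOrder ν.ord.ToType (· < ·) := isWellOrder_lt
  obtain ⟨S, hSunb', hScard⟩ := Order.exists_cof_eq ν.ord.ToType
  have hSunb : ∀ a, ∃ b ∈ S, ¬ b < a := fun a =>
    let ⟨b, hb, h⟩ := hSunb' a; ⟨b, hb, not_lt.2 h⟩
  rw [Ordinal.cof_toType] at hScard
  set 𝒱 : Set (Set X) := V '' S with h𝒱
  have h𝒱open : ∀ W ∈ 𝒱, IsOpen W := by rintro W ⟨s, _, rfl⟩; exact hVopen s
  have h𝒱cov : ⋃₀ 𝒱 = Set.univ := by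
    apply eq_univ_of_forall
    intro x
    have hx : x ∈ ⋃₀ 𝒰 := hcov ▸ mem_univ x
    obtain ⟨U, hU, hxU⟩ := hx
    obtain ⟨s, hsS, hns⟩ := hSunb (g ⟨U, hU⟩)
    exact ⟨V s, ⟨s, hsS, rfl⟩, U, ⟨hU, not_lt.1 hns⟩, hxU⟩
  have h𝒱le : Cardinal.mk 𝒱 ≤ ν.ord.cof := hScard ▸ Cardinal.mk_image_le
  -- get a subcover of size < cof
  obtain ⟨𝒱', h𝒱'sub, h𝒱'cov, h𝒱'card⟩ :
      ∃ 𝒱' ⊆ 𝒱, ⋃₀ 𝒱' = Set.univ ∧ Cardinal.mk 𝒱' < ν.ord.cof := by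
    rcases eq_or_lt_of_le h𝒱le with heq | hlt'
    · exact hcf 𝒱 h𝒱open h𝒱cov heq
    · exact ⟨𝒱, Subset.rfl, h𝒱cov, hlt'⟩
  -- choose indices for members of 𝒱'
  have hchoice : ∀ W : ↥𝒱', ∃ s : ν.ord.ToType, V s = (W : Set X) := by
    rintro ⟨W, hW⟩
    obtain ⟨s, _, rfl⟩ := h𝒱'sub hW
    exact ⟨s, rfl⟩
  choose idx hidx using hchoice
  -- the index set is bounded
  have hbdd : Set.Bounded ((· < ·) : ν.ord.ToType → ν.ord.ToType → Prop) (Set.range idx) := by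
    by_contra hnb
    have hcof : IsCofinal (Set.range idx) := fun a => by
      by_contra h; push_neg at h; exact hnb ⟨a, fun b hb => h b hb⟩
    have := Order.cof_le hcof
    rw [Ordinal.cof_toType] at this
    exact absurd ((Cardinal.mk_range_le).trans_lt h𝒱'card) (not_lt.2 this)
  obtain ⟨b, hb⟩ := hbdd
  -- V b = univ
  have hVb : V b = Set.univ := by
    apply eq_univ_of_forall
    intro x
    have hx : x ∈ ⋃₀ 𝒱' := h𝒱'cov ▸ mem_univ x
    obtain ⟨W, hW, hxW⟩ := hx
    have := hidx ⟨W, hW⟩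
    have hlt' : idx ⟨W, hW⟩ < b := hb _ (mem_range_self _)
    exact hVmono hlt'.le (this ▸ hxW)
  -- the subfamily of 𝒰 with index ≤ b
  set 𝒲 : Set (Set X) := {U | ∃ h : U ∈ 𝒰, g ⟨U, h⟩ ≤ b} with h𝒲
  have h𝒲sub : 𝒲 ⊆ 𝒰 := fun U hU => hU.1
  have h𝒲cov : ⋃₀ 𝒲 = Set.univ := hVb
  have h𝒲card : Cardinal.mk 𝒲 < ν := by
    have hinj : Cardinal.mk 𝒲 ≤ Cardinal.mk (Set.Iic b) := by
      apply Cardinal.mk_le_of_injective (f := fun U : ↥𝒲 =>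
        (⟨g ⟨U.1, U.2.1⟩, U.2.2⟩ : Set.Iic b))
      intro U U' h
      have h1 : g ⟨U.1, U.2.1⟩ = g ⟨U'.1, U'.2.1⟩ := congrArg Subtype.val h
      have h2 := g.injective h1
      have h3 := Subtype.ext_iff.1 h2
      exact Subtype.ext h3
    have hIic : Cardinal.mk (Set.Iic b) < ν := by
      have : (Set.Iic b : Set ν.ord.ToType) = Set.Iio b ∪ {b} := by
        rw [Set.Iio_union_right]
      rw [this]
      refine (Cardinal.mk_union_le _ _).trans_lt ?_
      have h1 : Cardinal.mk (Set.Iio b) < ν := Cardinal.mk_Iio_ord_toType b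
      have h2 : Cardinal.mk ({b} : Set ν.ord.ToType) < ν := by
        rw [Cardinal.mk_singleton]
        exact Cardinal.one_lt_aleph0.trans_le hν
      exact Cardinal.add_lt_of_lt hν h1 h2
    exact hinj.trans_lt hIic
  obtain ⟨t, htsub, htdense⟩ :=
    hlt (Cardinal.mk 𝒲) h𝒲card 𝒲 (fun U hU => hop U (h𝒲sub hU)) h𝒲cov le_rfl
  exact ⟨t, htsub.trans h𝒲sub, htdense⟩
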